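/- Satisfiability-preserving reduction of Bernays–Schönfinkel clauses to range-restricted Bernays–Schönfinkel clauses: if M is a set of BS clauses (without equality), then rr(M) is a range-restricted set of BS clauses, and M is satisfiable if and only if rr(M) is satisfiable; moreover the size of rr(M) is bounded by a linear function in the size of M. -/

import Mathlib

namespace BUMG

/-- First-order terms over function symbols `F`, with variables indexed by `ℕ`. -/
inductive Term (F : Type) : Type where
  | var : ℕ → Term F
  | app : F → List (Term F) → Term F

namespace Term
variable {F : Type}

/-- The list of variables occurring in a term. -/
def vars : Term F → List ℕ
  | var n => [n]
  | app _ ts => ts.attach.flatMap (fun t => vars t.1)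
decreasing_by simp_wf; have := List.sizeOf_lt_of_mem t.2; omega

/-- The function symbols (with the arity of the occurrence) occurring in a term. -/
def funcs : Term F → List (F × ℕ)
  | var _ => []
  | app f ts => (f, ts.length) :: ts.attach.flatMap (fun t => funcs t.1)
decreasing_by simp_wf; have := List.sizeOf_lt_of_mem t.2; omega

/-- Applying a substitution to a term. -/
def subst (g : ℕ → Term F) : Term F → Term F
  | var n => g n
  | app f ts => app f (ts.attach.map (fun t => subst g t.1))
decreasing_by simp_wf; have := List.sizeOf_lt_of_mem t.2; omega

/-- The number of occurrences of symbols (variables and function symbols) in a term. -/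
def size : Term F → ℕ
  | var _ => 1
  | app _ ts => 1 + (ts.attach.map (fun t => size t.1)).sum
decreasing_by simp_wf; have := List.sizeOf_lt_of_mem t.2; omega

/-- A term is ground iff it contains no variables. -/
def IsGround (t : Term F) : Prop := t.vars = []

def isVar : Term F → Bool
  | var _ => true
  | app _ _ => false

/-- A proper functional term is a term that is neither a variable nor a constant. -/
def isPF : Term F → Bool
  | app _ (_ :: _) => true
  | _ => false

/-- The subterm relation. -/
inductive Subterm : Term F → Term F → Prop
  | refl (t : Term F) : Subterm t t
  | app {s t : Term F} {f : F} {ts : List (Term F)} :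
      t ∈ ts → Subterm s t → Subterm s (app f ts)

end Term

/-- Atoms over predicate symbols `P` and function symbols `F`. -/
structure Atom (P F : Type) where
  pred : P
  args : List (Term F)

namespace Atom
variable {P F : Type}

def subst (g : ℕ → Term F) (a : Atom P F) : Atom P F := ⟨a.pred, a.args.map (Term.subst g)⟩
def vars (a : Atom P F) : List ℕ := a.args.flatMap Term.vars
def IsGround (a : Atom P F) : Prop := a.vars = []
def funcs (a : Atom P F) : List (F × ℕ) := a.args.flatMap Term.funcs
/-- Whether the atom contains a proper functional term. -/
def hasPF (a : Atom P F) : Bool := a.args.any Term.isPF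
def size (a : Atom P F) : ℕ := 1 + (a.args.map Term.size).sum

end Atom

/-- A clause `H₁ ∨ ... ∨ Hₘ ← B₁ ∧ ... ∧ Bₖ` with head atoms `heads`
and body atoms `body`. -/
structure Clause (P F : Type) where
  heads : List (Atom P F)
  body : List (Atom P F)

namespace Clause
variable {P F : Type}

def atoms (C : Clause P F) : List (Atom P F) := C.heads ++ C.body
def vars (C : Clause P F) : List ℕ := C.atoms.flatMap Atom.vars
def bodyVars (C : Clause P F) : List ℕ := C.body.flatMap Atom.vars
def headVars (C : Clause P F) : List ℕ := C.heads.flatMap Atom.vars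
def maxVar (C : Clause P F) : ℕ := C.vars.foldr max 0
def subst (g : ℕ → Term F) (C : Clause P F) : Clause P F :=
  ⟨C.heads.map (Atom.subst g), C.body.map (Atom.subst g)⟩
/-- The predicate symbols (with the arity of the occurrence) occurring in a clause. -/
def preds (C : Clause P F) : List (P × ℕ) := C.atoms.map (fun a => (a.pred, a.args.length))
/-- The function symbols (with the arity of the occurrence) occurring in a clause. -/
def funcs (C : Clause P F) : List (F × ℕ) := C.atoms.flatMap Atom.funcs
/-- The number of occurrences of symbols in a clause. -/
def size (C : Clause P F) : ℕ := (C.atoms.map Atom.size).sum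

/-- A clause is range-restricted iff every variable occurring in it occurs in its body. -/
def RangeRestricted (C : Clause P F) : Prop := ∀ v ∈ C.vars, v ∈ C.bodyVars

/-- A Bernays–Schönfinkel clause: every functional term occurring in it is a constant. -/
def BS (C : Clause P F) : Prop := ∀ fn ∈ C.funcs, fn.2 = 0

end Clause

/-- A clause set is range-restricted iff all its clauses are. -/
def RangeRestrictedSet {P F : Type} (M : Set (Clause P F)) : Prop :=
  ∀ C ∈ M, C.RangeRestricted

/-- The predicate symbols (with arities) occurring in a clause set. -/
def predsOf {P F : Type} (M : Set (Clause P F)) : Set (P × ℕ) :=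
  { pn | ∃ C ∈ M, pn ∈ C.preds }

/-- The function symbols (with arities) occurring in a clause set. -/
def funcsOf {P F : Type} (M : Set (Clause P F)) : Set (F × ℕ) :=
  { fn | ∃ C ∈ M, fn ∈ C.funcs }

/-- A signature: a set of predicate symbols with arities and
a set of function symbols with arities. -/
structure Sig (P F : Type) where
  preds : Set (P × ℕ)
  funcs : Set (F × ℕ)

/-- The clause set `M` is well-formed over the signature `σ`: all symbols occurring in `M`
belong to `σ` (with matching arities). -/
def WFSet {P F : Type} (σ : Sig P F) (M : Set (Clause P F)) : Prop :=
  ∀ C ∈ M, (∀ pn ∈ C.preds, pn ∈ σ.preds) ∧ (∀ fn ∈ C.funcs, fn ∈ σ.funcs)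

/-- The total number of occurrences of symbols in a clause set. -/
noncomputable def setSize {P F : Type} (M : Set (Clause P F)) : ℕ :=
  ∑ᶠ C ∈ M, C.size

/-! ### Herbrand semantics -/

/-- A substitution is ground iff it maps every variable to a ground term. -/
def GroundSubst {F : Type} (g : ℕ → Term F) : Prop := ∀ n, (g n).IsGround

/-- A (Herbrand) interpretation `I` (a set of ground atoms) satisfies a clause iff
it satisfies every ground instance of it. -/
def satClause {P F : Type} (I : Set (Atom P F)) (C : Clause P F) : Prop :=
  ∀ g : ℕ → Term F, GroundSubst g →
    (∀ a ∈ C.body, a.subst g ∈ I) → ∃ a ∈ C.heads, a.subst g ∈ I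

/-- A clause set is satisfiable iff some Herbrand interpretation (a set of ground atoms)
satisfies every ground instance of every clause of it. -/
def Satisfiable {P F : Type} (M : Set (Clause P F)) : Prop :=
  ∃ I : Set (Atom P F), (∀ a ∈ I, a.IsGround) ∧ ∀ C ∈ M, satClause I C

/-! ### Equality axioms and E-satisfiability -/

/-- The equality atom `s ≈ t` (`eqP` being the distinguished equality predicate `≈`). -/
def eqAtom {P F : Type} (eqP : P) (s t : Term F) : Atom P F := ⟨eqP, [s, t]⟩

def rangeVars {F : Type} (n : ℕ) : List (Term F) := (List.range n).map Term.var

def xsList {F : Type} (n : ℕ) : List (Term F) := (List.range n).map (fun i => Term.var (2*i))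
def ysList {F : Type} (n : ℕ) : List (Term F) := (List.range n).map (fun i => Term.var (2*i+1))
def eqConjList {P F : Type} (eqP : P) (n : ℕ) : List (Atom P F) :=
  (List.range n).map (fun i => eqAtom eqP (Term.var (2*i)) (Term.var (2*i+1)))

/-- The equality axioms `EAX`: `≈` is reflexive, symmetric, transitive and compatible with
the given function and predicate symbols. -/
def EAX {P F : Type} (eqP : P) (Ps : Set (P × ℕ)) (Fs : Set (F × ℕ)) : Set (Clause P F) :=
  { ⟨[eqAtom eqP (Term.var 0) (Term.var 0)], []⟩,
    ⟨[eqAtom eqP (Term.var 1) (Term.var 0)], [eqAtom eqP (Term.var 0) (Term.var 1)]⟩,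
    ⟨[eqAtom eqP (Term.var 0) (Term.var 2)],
      [eqAtom eqP (Term.var 0) (Term.var 1), eqAtom eqP (Term.var 1) (Term.var 2)]⟩ } ∪
  { D | ∃ fn ∈ Fs,
      D = ⟨[eqAtom eqP (Term.app fn.1 (xsList fn.2)) (Term.app fn.1 (ysList fn.2))],
           eqConjList eqP fn.2⟩ } ∪
  { D | ∃ pn ∈ Ps,
      D = ⟨[⟨pn.1, ysList pn.2⟩], ⟨pn.1, xsList pn.2⟩ :: eqConjList eqP pn.2⟩ }

/-- A clause set `M` is E-satisfiable iff `M` together with the equality axioms for the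
symbols occurring in `M` is satisfiable. -/
def ESatisfiable {P F : Type} (eqP : P) (M : Set (Clause P F)) : Prop :=
  Satisfiable (M ∪ EAX eqP (predsOf M) (funcsOf M))

/-! ### Range-restricting transformations -/

/-- The atom `dom(t)`. -/
def domAtom {P F : Type} (domP : P) (t : Term F) : Atom P F := ⟨domP, [t]⟩

/-- The term `c` for a constant `c`. -/
def cTerm {F : Type} (c : F) : Term F := Term.app c []

/-- The clause `dom(c) ← ⊤`. -/
def domcClause {P F : Type} (domP : P) (c : F) : Clause P F :=
  ⟨[domAtom domP (cTerm c)], []⟩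

/-- Range-restricting a clause (Step (2) of `crr`, Step (3) of `rr`):
`H ← B` becomes `H ← B ∧ dom(x₁) ∧ ... ∧ dom(xₖ)` where `x₁,...,xₖ` are the variables
occurring in the head but not in the body. -/
def rangeRestrictClause {P F : Type} (domP : P) (C : Clause P F) : Clause P F :=
  ⟨C.heads, C.body ++
    ((C.headVars.filter (fun v => v ∉ C.bodyVars)).dedup).map
      (fun v => domAtom domP (Term.var v))⟩

/-- The argument list of the term abstraction of an atom: argument positions holding
non-variable terms are replaced by fresh variables. -/
def abstrArgs {F : Type} (base : ℕ) (ts : List (Term F)) : List (Term F) :=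
  ts.mapIdx (fun i t => if t.isVar then t else Term.var (base + i))

/-- Step (2) of the `rr` transformation: for each clause `H ← B` of `M`, each body atom
`P(t₁,...,tₙ)` of `B` with term abstraction `P(s₁,...,sₙ)` and abstraction substitution `α`,
the clauses `dom(xᵢ)α ← P(s₁,...,sₙ)` for every `xᵢ` in the domain of `α`. -/
def step2Set {P F : Type} (domP : P) (M : Set (Clause P F)) : Set (Clause P F) :=
  { D | ∃ C ∈ M, ∃ a ∈ C.body, ∃ i : Fin a.args.length,
        (a.args.get i).isVar = false ∧
        D = ⟨[domAtom domP (a.args.get i)],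
             [⟨a.pred, abstrArgs (C.maxVar + 1) a.args⟩]⟩ }

/-- Step (4) of the `rr` transformation: the clauses `dom(xᵢ) ← P(x₁,...,xₙ)` for every
`n`-ary predicate symbol `P` of the signature and every `1 ≤ i ≤ n`. -/
def step4Set {P F : Type} (domP : P) (Ps : Set (P × ℕ)) : Set (Clause P F) :=
  { D | ∃ pn ∈ Ps, ∃ i, i < pn.2 ∧
        D = ⟨[domAtom domP (Term.var i)], [⟨pn.1, rangeVars pn.2⟩]⟩ }

/-- Step (5) of the `rr` transformation: the clauses `dom(xᵢ) ← dom(f(x₁,...,xₙ))` for every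
`n`-ary function symbol `f` of the signature and every `1 ≤ i ≤ n`. -/
def step5Set {P F : Type} (domP : P) (Fs : Set (F × ℕ)) : Set (Clause P F) :=
  { D | ∃ fn ∈ Fs, ∃ i, i < fn.2 ∧
        D = ⟨[domAtom domP (Term.var i)],
             [domAtom domP (Term.app fn.1 (rangeVars fn.2))]⟩ }

/-- The new range-restricting transformation `rr` (over the signature `σ`, with fresh unary
predicate symbol `dom` and constant `c`): the clauses of `M`, the clause `dom(c) ← ⊤` and
the Step-(2) clauses, all range-restricted by Step (3), together with the Step-(4) and
Step-(5) clauses. -/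
def rr {P F : Type} [DecidableEq P] [DecidableEq F] (σ : Sig P F) (domP : P) (c : F)
    (M : Set (Clause P F)) : Set (Clause P F) :=
  (rangeRestrictClause domP '' (M ∪ {domcClause domP c} ∪ step2Set domP M))
  ∪ step4Set domP σ.preds ∪ step5Set domP σ.funcs

/-- Step (3) of the classical transformation `crr`: the clauses
`dom(f(x₁,...,xₙ)) ← dom(x₁) ∧ ... ∧ dom(xₙ)` enumerating the Herbrand universe. -/
def crrStep3 {P F : Type} (domP : P) (Fs : Set (F × ℕ)) : Set (Clause P F) :=
  { D | ∃ fn ∈ Fs,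
        D = ⟨[domAtom domP (Term.app fn.1 (rangeVars fn.2))],
             (List.range fn.2).map (fun i => domAtom domP (Term.var i))⟩ }

/-- The classical range-restricting transformation `crr`. -/
def crr {P F : Type} [DecidableEq P] [DecidableEq F] (σ : Sig P F) (domP : P) (c : F)
    (M : Set (Clause P F)) : Set (Clause P F) :=
  (rangeRestrictClause domP '' (M ∪ {domcClause domP c})) ∪ crrStep3 domP σ.funcs

/-! ### Shifting -/

/-- Partial flattening of the arguments of a non-equational body atom: top-level proper
functional terms are replaced by fresh variables. The `j`-th body atom uses the fresh
variables `base + Nat.pair j i`. -/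
def pfArgs {P F : Type} [DecidableEq P] (eqP : P) (base j : ℕ) (a : Atom P F) : Atom P F :=
  if a.pred = eqP then a
  else ⟨a.pred, a.args.mapIdx (fun i t => if t.isPF then Term.var (base + Nat.pair j i) else t)⟩

/-- The equations `tᵢ ≈ xᵢ` introduced by partially flattening a body atom. -/
def pfEqs {P F : Type} [DecidableEq P] (eqP : P) (base j : ℕ) (a : Atom P F) :
    List (Atom P F) :=
  if a.pred = eqP then []
  else (a.args.mapIdx (fun i t => (i, t))).filterMap
        (fun p => if p.2.isPF then
            some (eqAtom eqP p.2 (Term.var (base + Nat.pair j p.1))) else none)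

/-- Partial flattening of a clause. -/
def pfClause {P F : Type} [DecidableEq P] (eqP : P) (C : Clause P F) : Clause P F :=
  ⟨C.heads,
   C.body.mapIdx (fun j a => pfArgs eqP (C.maxVar + 1) j a) ++
   (C.body.mapIdx (fun j a => pfEqs eqP (C.maxVar + 1) j a)).flatten⟩

/-- The reflexivity unit clause `x ≈ x ← ⊤`. -/
def reflClause {P F : Type} (eqP : P) : Clause P F :=
  ⟨[eqAtom eqP (Term.var 0) (Term.var 0)], []⟩

/-- The partial flattening transformation `pf`. -/
def pf {P F : Type} [DecidableEq P] (eqP : P) (M : Set (Clause P F)) : Set (Clause P F) :=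
  pfClause eqP '' M ∪ {reflClause eqP}

/-- The atom `P̄(t₁,...,tₙ)` for the atom `P(t₁,...,tₙ)`, where `bar` maps each predicate
symbol `P` to the fresh predicate symbol `P̄` uniquely associated with it. -/
def barAtom {P F : Type} (bar : P → P) (a : Atom P F) : Atom P F := ⟨bar a.pred, a.args⟩

/-- Basic shifting of a clause: the body atoms containing a proper functional term are
moved, negated (via `bar`), into the head. -/
def bsClause {P F : Type} (bar : P → P) (C : Clause P F) : Clause P F :=
  ⟨C.heads ++ (C.body.filter (fun a => a.hasPF)).map (barAtom bar),
   C.body.filter (fun a => !a.hasPF)⟩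

/-- The predicate symbols (with arities) of shifted atoms of `M`. -/
def shiftedPreds {P F : Type} (M : Set (Clause P F)) : Set (P × ℕ) :=
  { pn | ∃ C ∈ M, ∃ a ∈ C.body, a.hasPF = true ∧ pn = (a.pred, a.args.length) }

/-- The basic shifting transformation `bs`: shift deep body atoms and add the shifted atom
consistency clauses `⊥ ← P(x₁,...,xₙ) ∧ P̄(x₁,...,xₙ)`. -/
def bs {P F : Type} (bar : P → P) (M : Set (Clause P F)) : Set (Clause P F) :=
  bsClause bar '' M ∪
  { D | ∃ pn ∈ shiftedPreds M,
        D = ⟨[], [⟨pn.1, rangeVars pn.2⟩, ⟨bar pn.1, rangeVars pn.2⟩]⟩ }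

/-- The shifting transformation: `sh(M) = bs(pf(M))`. -/
def sh {P F : Type} [DecidableEq P] (eqP : P) (bar : P → P) (M : Set (Clause P F)) :
    Set (Clause P F) :=
  bs bar (pf eqP M)

/-! ### Blocking -/

/-- The head `x ≈ y ∨ x ≉ y` of the blocking clauses. -/
def blockSplitHead {P F : Type} (eqP neqP : P) : List (Atom P F) :=
  [eqAtom eqP (Term.var 0) (Term.var 1), eqAtom neqP (Term.var 0) (Term.var 1)]

/-- The clause `⊥ ← x ≈ y ∧ x ≉ y`. -/
def eqNeqBot {P F : Type} (eqP neqP : P) : Clause P F :=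
  ⟨[], [eqAtom eqP (Term.var 0) (Term.var 1), eqAtom neqP (Term.var 0) (Term.var 1)]⟩

/-- The unrestricted domain blocking transformation `blud`. -/
def blud {P F : Type} (domP eqP neqP : P) (M : Set (Clause P F)) : Set (Clause P F) :=
  M ∪ { ⟨blockSplitHead eqP neqP, [domAtom domP (Term.var 0), domAtom domP (Term.var 1)]⟩,
        eqNeqBot eqP neqP }

/-- The atom `sub(s,t)`. -/
def subAtom {P F : Type} (subP : P) (s t : Term F) : Atom P F := ⟨subP, [s, t]⟩

/-- The axioms describing the subterm relationship: `sub(x,x) ← dom(x)` and, for every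
`n`-ary function symbol `f` of the signature and `1 ≤ i ≤ n`,
`sub(x, f(x₁,...,xₙ)) ← sub(x,xᵢ) ∧ dom(x) ∧ dom(f(x₁,...,xₙ))`. -/
def subClauses {P F : Type} (domP subP : P) (Fs : Set (F × ℕ)) : Set (Clause P F) :=
  { ⟨[subAtom subP (Term.var 0) (Term.var 0)], [domAtom domP (Term.var 0)]⟩ } ∪
  { D | ∃ fn ∈ Fs, ∃ i, i < fn.2 ∧
        D = ⟨[subAtom subP (Term.var fn.2) (Term.app fn.1 (rangeVars fn.2))],
             [subAtom subP (Term.var fn.2) (Term.var i),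
              domAtom domP (Term.var fn.2),
              domAtom domP (Term.app fn.1 (rangeVars fn.2))]⟩ }

/-- The subterm domain blocking transformation `blsd`. -/
def blsd {P F : Type} (σ : Sig P F) (domP eqP neqP subP : P) (M : Set (Clause P F)) :
    Set (Clause P F) :=
  M ∪ subClauses domP subP σ.funcs ∪
  { ⟨blockSplitHead eqP neqP, [subAtom subP (Term.var 0) (Term.var 1)]⟩,
    eqNeqBot eqP neqP }

/-- The subterm predicate blocking transformation `blsp`. -/
def blsp {P F : Type} (σ : Sig P F) (domP eqP neqP subP : P) (M : Set (Clause P F)) :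
    Set (Clause P F) :=
  M ∪ subClauses domP subP σ.funcs ∪
  { D | ∃ p : P, (p, 1) ∈ σ.preds ∧
        D = ⟨blockSplitHead eqP neqP,
             [subAtom subP (Term.var 0) (Term.var 1),
              ⟨p, [Term.var 0]⟩, ⟨p, [Term.var 1]⟩]⟩ } ∪
  { eqNeqBot eqP neqP }

/-- The unrestricted predicate blocking transformation `blup`. -/
def blup {P F : Type} (σ : Sig P F) (domP eqP neqP : P) (M : Set (Clause P F)) :
    Set (Clause P F) :=
  M ∪ { D | ∃ p : P, (p, 1) ∈ σ.preds ∧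
        D = ⟨blockSplitHead eqP neqP, [⟨p, [Term.var 0]⟩, ⟨p, [Term.var 1]⟩]⟩ } ∪
  { eqNeqBot eqP neqP }

/-! ### Combined transformations -/

/-- The base transformations `rr`, `sh∘rr`, `crr`, `sh∘crr`
(composition read left-to-right, so `(sh∘rr)(M) = rr(sh(M))`). -/
inductive BaseTr | rr | shrr | crr | shcrr

/-- The optional blocking transformations. -/
inductive BlockTr | id | blsd | blsp | blud | blup

def applyBase {P F : Type} [DecidableEq P] [DecidableEq F] (σ : Sig P F) (domP : P) (c : F)
    (eqP : P) (bar : P → P) : BaseTr → Set (Clause P F) → Set (Clause P F)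
  | .rr, M => rr σ domP c M
  | .shrr, M => rr σ domP c (sh eqP bar M)
  | .crr, M => crr σ domP c M
  | .shcrr, M => crr σ domP c (sh eqP bar M)

def applyBlock {P F : Type} (σ : Sig P F) (domP eqP neqP subP : P) :
    BlockTr → Set (Clause P F) → Set (Clause P F)
  | .id, M => M
  | .blsd, M => blsd σ domP eqP neqP subP M
  | .blsp, M => blsp σ domP eqP neqP subP M
  | .blud, M => blud domP eqP neqP M
  | .blup, M => blup σ domP eqP neqP M

/-- A combined transformation: a base transformation optionally followed by a blocking
transformation (composition read left-to-right). -/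
def applyTr {P F : Type} [DecidableEq P] [DecidableEq F] (σ : Sig P F) (domP : P) (c : F)
    (eqP neqP subP : P) (bar : P → P) (b : BaseTr) (τ : BlockTr) (M : Set (Clause P F)) :
    Set (Clause P F) :=
  applyBlock σ domP eqP neqP subP τ (applyBase σ domP c eqP bar b M)

/-- The clause `x ≈ x ← dom(x)`. -/
def reflDomClause {P F : Type} (domP eqP : P) : Clause P F :=
  ⟨[eqAtom eqP (Term.var 0) (Term.var 0)], [domAtom domP (Term.var 0)]⟩

end BUMG

namespace BUMG


section Basics
variable {P F : Type}

@[simp] lemma Term.vars_var (n : ℕ) : (Term.var n : Term F).vars = [n] := by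
  simp [Term.vars]

@[simp] lemma Term.vars_const (f : F) : (Term.app f [] : Term F).vars = [] := by
  simp [Term.vars]

@[simp] lemma Term.subst_var (g : ℕ → Term F) (n : ℕ) : (Term.var n : Term F).subst g = g n := by
  simp [Term.subst]

@[simp] lemma Term.subst_const (g : ℕ → Term F) (f : F) :
    (Term.app f [] : Term F).subst g = Term.app f [] := by
  simp [Term.subst]

@[simp] lemma Term.funcs_var (n : ℕ) : (Term.var n : Term F).funcs = [] := by
  simp [Term.funcs]

@[simp] lemma Term.funcs_const (f : F) : (Term.app f [] : Term F).funcs = [(f, 0)] := by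
  simp [Term.funcs]

@[simp] lemma Term.size_var (n : ℕ) : (Term.var n : Term F).size = 1 := by
  simp [Term.size]

@[simp] lemma Term.size_const (f : F) : (Term.app f [] : Term F).size = 1 := by
  simp [Term.size]

/-- A shallow term: a variable or a constant. -/
def Shallow (t : Term F) : Prop := (∃ n, t = Term.var n) ∨ (∃ f, t = Term.app f [])

lemma shallow_of_isVar {t : Term F} (h : t.isVar = true) : ∃ n, t = Term.var n := by
  cases t with
  | var n => exact ⟨n, rfl⟩
  | app f ts => simp [Term.isVar] at h

lemma shallow_var {t : Term F} (h : Shallow t) (h2 : t.isVar = true) : ∃ n, t = Term.var n :=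
  shallow_of_isVar h2

lemma shallow_const {t : Term F} (h : Shallow t) (h2 : t.isVar = false) :
    ∃ f, t = Term.app f [] := by
  rcases h with ⟨n, rfl⟩ | hf
  · simp [Term.isVar] at h2
  · exact hf

end Basics

section Shallow
variable {P F : Type}

lemma Shallow.subst_ground {t : Term F} (h : Shallow t) {g : ℕ → Term F}
    (hg : GroundSubst g) : (t.subst g).IsGround := by
  rcases h with ⟨n, rfl⟩ | ⟨f, rfl⟩
  · simpa using hg n
  · simp [Term.IsGround]

lemma ground_subst_eq {t : Term F} (h : Shallow t) (hg : t.IsGround) (g : ℕ → Term F) :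
    t.subst g = t := by
  rcases h with ⟨n, rfl⟩ | ⟨f, rfl⟩
  · simp [Term.IsGround] at hg
  · simp

/-- Every argument of every atom of a BS clause is shallow. -/
lemma shallow_of_BS {C : Clause P F} (hBS : C.BS) {a : Atom P F} (ha : a ∈ C.atoms)
    {t : Term F} (ht : t ∈ a.args) : Shallow t := by
  cases t with
  | var n => exact Or.inl ⟨n, rfl⟩
  | app f ts =>
    refine Or.inr ⟨f, ?_⟩
    have hmem : (f, ts.length) ∈ C.funcs := by
      unfold Clause.funcs
      rw [List.mem_flatMap]
      refine ⟨a, ha, ?_⟩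
      unfold Atom.funcs
      rw [List.mem_flatMap]
      refine ⟨Term.app f ts, ht, ?_⟩
      rw [Term.funcs]
      exact List.mem_cons_self
    have := hBS _ hmem
    simp only [List.length_eq_zero_iff] at this
    rw [this]

/-- A clause all of whose atom arguments are shallow. -/
def ShallowClause (C : Clause P F) : Prop := ∀ a ∈ C.atoms, ∀ t ∈ a.args, Shallow t

lemma shallowClause_of_BS {C : Clause P F} (hBS : C.BS) : ShallowClause C :=
  fun _ ha _ ht => shallow_of_BS hBS ha ht

lemma Atom.ground_args {a : Atom P F} (h : a.IsGround) {t : Term F} (ht : t ∈ a.args) :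
    t.IsGround := by
  unfold Atom.IsGround Atom.vars at h
  rw [List.flatMap_eq_nil_iff] at h
  exact h t ht

lemma Atom.ground_of_args {a : Atom P F} (h : ∀ t ∈ a.args, t.IsGround) : a.IsGround := by
  unfold Atom.IsGround Atom.vars
  rw [List.flatMap_eq_nil_iff]
  exact h

lemma Atom.subst_ground {a : Atom P F} (h : ∀ t ∈ a.args, Shallow t) {g : ℕ → Term F}
    (hg : GroundSubst g) : (a.subst g).IsGround := by
  apply Atom.ground_of_args
  intro t ht
  unfold Atom.subst at ht
  simp only [List.mem_map] at ht
  obtain ⟨s, hs, rfl⟩ := ht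
  exact (h s hs).subst_ground hg

lemma le_foldr_max {v : ℕ} : ∀ {l : List ℕ}, v ∈ l → v ≤ l.foldr max 0 := by
  intro l
  induction l with
  | nil => simp
  | cons a l ih =>
    intro hv
    rcases List.mem_cons.mp hv with rfl | hv
    · exact le_max_left _ _
    · exact le_trans (ih hv) (le_max_right _ _)

lemma mem_vars_le_maxVar {C : Clause P F} {v : ℕ} (h : v ∈ C.vars) : v ≤ C.maxVar :=
  le_foldr_max h

lemma atom_vars_subset {C : Clause P F} {a : Atom P F} (ha : a ∈ C.atoms) {v : ℕ}
    (hv : v ∈ a.vars) : v ∈ C.vars := by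
  unfold Clause.vars
  rw [List.mem_flatMap]
  exact ⟨a, ha, hv⟩

lemma term_var_mem_atom_vars {a : Atom P F} {t : Term F} (ht : t ∈ a.args) {v : ℕ}
    (hv : v ∈ t.vars) : v ∈ a.vars := by
  unfold Atom.vars
  rw [List.mem_flatMap]
  exact ⟨t, ht, hv⟩

@[simp] lemma Atom.subst_pred (g : ℕ → Term F) (a : Atom P F) : (a.subst g).pred = a.pred := rfl

@[simp] lemma Atom.subst_args (g : ℕ → Term F) (a : Atom P F) :
    (a.subst g).args = a.args.map (Term.subst g) := rfl

@[simp] lemma domAtom_subst (g : ℕ → Term F) (domP : P) (t : Term F) :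
    (domAtom domP t).subst g = domAtom domP (t.subst g) := by
  simp [domAtom, Atom.subst]

end Shallow

section RRStruct
variable {P F : Type}

@[simp] lemma rangeRestrictClause_heads (domP : P) (C : Clause P F) :
    (rangeRestrictClause domP C).heads = C.heads := rfl

lemma rangeRestrictClause_body (domP : P) (C : Clause P F) :
    (rangeRestrictClause domP C).body = C.body ++
      ((C.headVars.filter (fun v => v ∉ C.bodyVars)).dedup).map
        (fun v => domAtom domP (Term.var v)) := rfl

@[simp] lemma domAtom_vars (domP : P) (t : Term F) : (domAtom domP t).vars = t.vars := by
  simp [domAtom, Atom.vars]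

lemma clause_vars_eq (C : Clause P F) : C.vars = C.headVars ++ C.bodyVars := by
  unfold Clause.vars Clause.headVars Clause.bodyVars Clause.atoms
  rw [List.flatMap_append]

lemma rangeRestrictClause_rangeRestricted (domP : P) (C : Clause P F) :
    (rangeRestrictClause domP C).RangeRestricted := by
  intro v hv
  set D := rangeRestrictClause domP C with hD
  have hbodyD : D.bodyVars = C.bodyVars ++
      ((C.headVars.filter (fun v => v ∉ C.bodyVars)).dedup).flatMap
        (fun v => [v]) := by
    unfold Clause.bodyVars
    rw [hD, rangeRestrictClause_body, List.flatMap_append, List.flatMap_map]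
    congr 1
    apply List.flatMap_congr
    intro x _
    simp
  have hmemD : ∀ w, w ∈ C.bodyVars ∨ (w ∈ C.headVars ∧ w ∉ C.bodyVars) → w ∈ D.bodyVars := by
    intro w hw
    rw [hbodyD, List.mem_append]
    rcases hw with h | ⟨h1, h2⟩
    · exact Or.inl h
    · right
      rw [List.flatMap_singleton', List.mem_dedup, List.mem_filter]
      exact ⟨h1, by simpa using h2⟩
  rw [clause_vars_eq D] at hv
  rcases List.mem_append.mp hv with hv | hv
  · -- head vars of D = head vars of C
    have hv' : v ∈ C.headVars := hv
    by_cases hb : v ∈ C.bodyVars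
    · exact hmemD v (Or.inl hb)
    · exact hmemD v (Or.inr ⟨hv', hb⟩)
  · exact hv

lemma rangeRestrictClause_funcs (domP : P) (C : Clause P F) :
    (rangeRestrictClause domP C).funcs = C.funcs := by
  unfold Clause.funcs Clause.atoms
  rw [rangeRestrictClause_body, rangeRestrictClause_heads]
  rw [← List.append_assoc, List.flatMap_append, List.flatMap_append]
  have : (((C.headVars.filter (fun v => v ∉ C.bodyVars)).dedup).map
      (fun v => domAtom domP (Term.var v))).flatMap Atom.funcs = ([] : List (F × ℕ)) := by
    rw [List.flatMap_eq_nil_iff]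
    intro a ha
    rw [List.mem_map] at ha
    obtain ⟨v, _, rfl⟩ := ha
    simp [domAtom, Atom.funcs]
  rw [this, List.append_nil]

lemma rangeRestrictClause_BS (domP : P) {C : Clause P F} (h : C.BS) :
    (rangeRestrictClause domP C).BS := by
  intro fn hfn
  rw [rangeRestrictClause_funcs] at hfn
  exact h fn hfn

@[simp] lemma rangeVars_vars (p : P) (n : ℕ) :
    (Atom.vars (⟨p, rangeVars n⟩ : Atom P F)) = List.range n := by
  show (rangeVars n : List (Term F)).flatMap Term.vars = _
  unfold rangeVars
  rw [List.flatMap_map]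
  simp only [Term.vars_var]
  rw [List.flatMap_singleton']

lemma step5Set_empty (domP : P) {Fs : Set (F × ℕ)} (h : ∀ fn ∈ Fs, fn.2 = 0) :
    step5Set domP Fs = (∅ : Set (Clause P F)) := by
  ext D
  simp only [step5Set, Set.mem_setOf_eq, Set.mem_empty_iff_false, iff_false]
  rintro ⟨fn, hfn, i, hi, _⟩
  rw [h fn hfn] at hi
  omega

lemma rr_eq (σ : Sig P F) (domP : P) (c : F) (M : Set (Clause P F)) [DecidableEq P]
    [DecidableEq F] (h : ∀ fn ∈ σ.funcs, fn.2 = 0) :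
    rr σ domP c M = (rangeRestrictClause domP '' (M ∪ {domcClause domP c} ∪ step2Set domP M))
      ∪ step4Set domP σ.preds := by
  unfold rr
  rw [step5Set_empty domP h, Set.union_empty]

end RRStruct

section Parts12
variable {P F : Type}

lemma abstrArgs_length (base : ℕ) (ts : List (Term F)) :
    (abstrArgs base ts).length = ts.length := by
  unfold abstrArgs; exact List.length_mapIdx

lemma abstrArgs_isvar (base : ℕ) {ts : List (Term F)} {t : Term F}
    (ht : t ∈ abstrArgs base ts) : ∃ n, t = Term.var n := by
  unfold abstrArgs at ht
  rw [List.mem_mapIdx] at ht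
  obtain ⟨i, hi, rfl⟩ := ht
  by_cases hv : (ts[i]).isVar
  · rw [if_pos hv]; exact shallow_of_isVar hv
  · rw [if_neg hv]; exact ⟨base + i, rfl⟩

lemma funcs_nil_of_vars {a : Atom P F} (h : ∀ t ∈ a.args, ∃ n, t = Term.var n) :
    a.funcs = [] := by
  unfold Atom.funcs
  rw [List.flatMap_eq_nil_iff]
  intro t ht
  obtain ⟨n, rfl⟩ := h t ht
  simp

lemma step2_mem_struct {domP : P} {M : Set (Clause P F)} {D : Clause P F}
    (hBS : ∀ C ∈ M, Clause.BS C) (hD : D ∈ step2Set domP M) :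
    (∃ f : F, D.heads = [domAtom domP (Term.app f [])]) ∧
    (∃ p : P, ∃ ts : List (Term F), D.body = [⟨p, ts⟩] ∧ ∀ t ∈ ts, ∃ n, t = Term.var n) := by
  obtain ⟨C, hC, a, ha, i, hiv, rfl⟩ := hD
  have hsh : Shallow (a.args.get i) := by
    refine shallow_of_BS (hBS C hC) ?_ (List.get_mem a.args i)
    exact List.mem_append_right _ ha
  obtain ⟨f, hf⟩ := shallow_const hsh hiv
  exact ⟨⟨f, by rw [hf]⟩, ⟨a.pred, abstrArgs (C.maxVar + 1) a.args, rfl,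
    fun t ht => abstrArgs_isvar _ ht⟩⟩

lemma step2_BS {domP : P} {M : Set (Clause P F)} {D : Clause P F}
    (hBS : ∀ C ∈ M, Clause.BS C) (hD : D ∈ step2Set domP M) : D.BS := by
  obtain ⟨⟨f, hheads⟩, ⟨p, ts, hbody, hts⟩⟩ := step2_mem_struct hBS hD
  intro fn hfn
  unfold Clause.funcs Clause.atoms at hfn
  rw [hheads, hbody] at hfn
  rw [List.mem_flatMap] at hfn
  obtain ⟨a, haa, hfa⟩ := hfn
  simp only [List.mem_append, List.mem_singleton] at haa
  rcases haa with rfl | rfl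
  · unfold Atom.funcs domAtom at hfa
    simp at hfa
    rw [hfa]
  · rw [funcs_nil_of_vars hts] at hfa
    exact absurd hfa List.not_mem_nil

lemma step2_shallow {domP : P} {M : Set (Clause P F)} {D : Clause P F}
    (hBS : ∀ C ∈ M, Clause.BS C) (hD : D ∈ step2Set domP M) : ShallowClause D := by
  obtain ⟨⟨f, hheads⟩, ⟨p, ts, hbody, hts⟩⟩ := step2_mem_struct hBS hD
  intro a ha t ht
  unfold Clause.atoms at ha
  rw [hheads, hbody] at ha
  simp only [List.mem_append, List.mem_singleton] at ha
  rcases ha with rfl | rfl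
  · unfold domAtom at ht
    simp only [List.mem_singleton] at ht
    exact Or.inr ⟨f, ht⟩
  · obtain ⟨n, rfl⟩ := hts t ht
    exact Or.inl ⟨n, rfl⟩

lemma domc_BS (domP : P) (c : F) : (domcClause domP c).BS := by
  intro fn hfn
  unfold domcClause Clause.funcs Clause.atoms domAtom cTerm Atom.funcs at hfn
  simp at hfn
  rw [hfn]

lemma domc_shallow (domP : P) (c : F) : ShallowClause (domcClause domP c) := by
  intro a ha t ht
  unfold domcClause Clause.atoms domAtom at ha
  simp at ha
  subst ha
  simp only [List.mem_singleton] at ht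
  exact Or.inr ⟨c, ht⟩

lemma step4_mem_struct {domP : P} {Ps : Set (P × ℕ)} {D : Clause P F}
    (hD : D ∈ step4Set domP Ps) :
    ∃ p : P, ∃ n i : ℕ, i < n ∧ (p, n) ∈ Ps ∧
      D = ⟨[domAtom domP (Term.var i)], [⟨p, rangeVars n⟩]⟩ := by
  obtain ⟨pn, hpn, i, hi, rfl⟩ := hD
  exact ⟨pn.1, pn.2, i, hi, hpn, rfl⟩

lemma step4_RR {domP : P} {Ps : Set (P × ℕ)} {D : Clause P F}
    (hD : D ∈ step4Set domP Ps) : D.RangeRestricted := by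
  obtain ⟨p, n, i, hi, _, rfl⟩ := step4_mem_struct hD
  intro v hv
  unfold Clause.vars Clause.atoms Clause.bodyVars at *
  simp only [List.flatMap_append] at hv
  rw [List.mem_append] at hv
  have hbody : (([⟨p, rangeVars n⟩] : List (Atom P F)).flatMap Atom.vars) = List.range n := by
    rw [List.flatMap_singleton, rangeVars_vars]
  rw [hbody]
  rcases hv with hv | hv
  · rw [List.flatMap_singleton, domAtom_vars, Term.vars_var, List.mem_singleton] at hv
    subst hv
    exact List.mem_range.mpr hi
  · rw [hbody] at hv
    exact hv

lemma step4_BS {domP : P} {Ps : Set (P × ℕ)} {D : Clause P F}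
    (hD : D ∈ step4Set domP Ps) : D.BS := by
  obtain ⟨p, n, i, hi, _, rfl⟩ := step4_mem_struct hD
  intro fn hfn
  unfold Clause.funcs Clause.atoms at hfn
  rw [List.mem_flatMap] at hfn
  obtain ⟨a, haa, hfa⟩ := hfn
  simp only [List.append_nil, List.cons_append, List.mem_cons, List.mem_singleton,
    List.not_mem_nil, or_false, List.nil_append] at haa
  have hvars : ∀ t ∈ a.args, ∃ m, t = Term.var m := by
    rcases haa with rfl | rfl
    · intro t ht
      unfold domAtom at ht
      simp only [List.mem_singleton] at ht
      exact ⟨i, ht⟩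
    · intro t ht
      have : t ∈ (rangeVars n : List (Term F)) := ht
      unfold rangeVars at this
      rw [List.mem_map] at this
      obtain ⟨m, _, rfl⟩ := this
      exact ⟨m, rfl⟩
  rw [funcs_nil_of_vars hvars] at hfa
  exact absurd hfa List.not_mem_nil

end Parts12

section Parts12b
variable {P F : Type} [DecidableEq P] [DecidableEq F]

lemma rr_is_RR (σ : Sig P F) (domP : P) (c : F) (M : Set (Clause P F))
    (hσBS : ∀ fn ∈ σ.funcs, fn.2 = 0) : RangeRestrictedSet (rr σ domP c M) := by
  intro D hD
  rcases hD with (himg | h4) | h5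
  · obtain ⟨C', _, rfl⟩ := himg
    exact rangeRestrictClause_rangeRestricted domP C'
  · exact step4_RR h4
  · rw [step5Set_empty domP hσBS] at h5
    exact absurd h5 (Set.notMem_empty D)

lemma rr_is_BS (σ : Sig P F) (domP : P) (c : F) (M : Set (Clause P F))
    (hσBS : ∀ fn ∈ σ.funcs, fn.2 = 0) (hBS : ∀ C ∈ M, Clause.BS C) :
    ∀ D ∈ rr σ domP c M, Clause.BS D := by
  intro D hD
  rcases hD with (himg | h4) | h5
  · obtain ⟨C', hC', rfl⟩ := himg
    apply rangeRestrictClause_BS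
    rcases hC' with (hC' | hC') | hC'
    · exact hBS C' hC'
    · rw [Set.mem_singleton_iff] at hC'
      subst hC'
      exact domc_BS domP c
    · exact step2_BS hBS hC'
  · exact step4_BS h4
  · rw [step5Set_empty domP hσBS] at h5
    exact absurd h5 (Set.notMem_empty D)

end Parts12b

section SatFwd
variable {P F : Type} [DecidableEq P] [DecidableEq F]

lemma pred_in_preds {C : Clause P F} {a : Atom P F} (ha : a ∈ C.atoms) :
    (a.pred, a.args.length) ∈ C.preds := by
  unfold Clause.preds
  exact List.mem_map_of_mem ha

lemma sat_rr_of_sat (σ : Sig P F) (domP : P) (c : F) (M : Set (Clause P F))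
    (hWF : WFSet σ M) (hdomFresh : ∀ n, (domP, n) ∉ σ.preds)
    (hσBS : ∀ fn ∈ σ.funcs, fn.2 = 0) (hsat : Satisfiable M) :
    Satisfiable (rr σ domP c M) := by
  obtain ⟨I, hIg, hI⟩ := hsat
  classical
  set I' : Set (Atom P F) := I ∪ {A | ∃ t : Term F, t.IsGround ∧ A = domAtom domP t} with hI'
  have hBS : ∀ C ∈ M, Clause.BS C := by
    intro C hC fn hfn
    exact hσBS fn ((hWF C hC).2 fn hfn)
  have hdom_mem : ∀ t : Term F, t.IsGround → domAtom domP t ∈ I' := by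
    intro t ht
    exact Or.inr ⟨t, ht, rfl⟩
  refine ⟨I', ?_, ?_⟩
  · intro a ha
    rcases ha with ha | ⟨t, ht, rfl⟩
    · exact hIg a ha
    · apply Atom.ground_of_args
      intro s hs
      unfold domAtom at hs
      simp only [List.mem_singleton] at hs
      subst hs
      exact ht
  · intro D hD
    rcases hD with (himg | h4) | h5
    · obtain ⟨C', hC', rfl⟩ := himg
      rcases hC' with (hC' | hC') | hC'
      · -- C' ∈ M
        intro g hg hb
        have hbC : ∀ a ∈ C'.body, a.subst g ∈ I := by
          intro a ha
          have hmem : a.subst g ∈ I' := by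
            apply hb
            rw [rangeRestrictClause_body]
            exact List.mem_append_left _ ha
          have hpred : a.pred ≠ domP := by
            intro h
            have := (hWF C' hC').1 _ (pred_in_preds (List.mem_append_right _ ha))
            rw [h] at this
            exact hdomFresh _ this
          rcases hmem with hmem | ⟨t, _, heq⟩
          · exact hmem
          · exfalso
            apply hpred
            have : (a.subst g).pred = (domAtom domP t).pred := by rw [heq]
            simpa [domAtom] using this
        obtain ⟨a₀, ha₀, ha₀I⟩ := hI C' hC' g hg hbC
        exact ⟨a₀, ha₀, Or.inl ha₀I⟩
      · -- C' = domc
        rw [Set.mem_singleton_iff] at hC'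
        subst hC'
        intro g hg _
        refine ⟨domAtom domP (cTerm c), List.mem_singleton.mpr rfl, ?_⟩
        rw [domAtom_subst]
        unfold cTerm
        rw [Term.subst_const]
        exact hdom_mem _ (by simp [Term.IsGround])
      · -- C' ∈ step2Set
        obtain ⟨⟨f, hheads⟩, _⟩ := step2_mem_struct hBS hC'
        intro g hg _
        refine ⟨domAtom domP (Term.app f []), ?_, ?_⟩
        · rw [rangeRestrictClause_heads, hheads]
          exact List.mem_singleton.mpr rfl
        · rw [domAtom_subst, Term.subst_const]
          exact hdom_mem _ (by simp [Term.IsGround])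
    · obtain ⟨p, n, i, hi, _, rfl⟩ := step4_mem_struct h4
      intro g hg _
      refine ⟨domAtom domP (Term.var i), List.mem_singleton.mpr rfl, ?_⟩
      rw [domAtom_subst, Term.subst_var]
      exact hdom_mem _ (hg i)
    · rw [step5Set_empty domP hσBS] at h5
      exact absurd h5 (Set.notMem_empty D)

end SatFwd

section SatBack
variable {P F : Type}

lemma map_subst_h (h : Term F → Term F) {args : List (Term F)}
    (hsh : ∀ t ∈ args, Shallow t)
    (hfix : ∀ t ∈ args, t.isVar = false → h t = t) (g : ℕ → Term F) :
    args.map (Term.subst (fun n => h (g n))) = (args.map (Term.subst g)).map h := by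
  rw [List.map_map]
  apply List.map_congr_left
  intro t ht
  rcases hsh t ht with ⟨x, rfl⟩ | ⟨f, rfl⟩
  · simp
  · have hfalse : (Term.app f [] : Term F).isVar = false := by simp [Term.isVar]
    simp only [Term.subst_const, Function.comp_apply]
    exact (hfix _ ht hfalse).symm

lemma abstrArgs_subst {ts : List (Term F)} {base : ℕ} (g : ℕ → Term F) (h : Term F → Term F)
    (hvarlt : ∀ x, Term.var x ∈ ts → x < base) (d : Term F) :
    (abstrArgs base ts).map (Term.subst
        (fun n => if n < base then h (g n) else h ((ts.getD (n - base) d).subst g)))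
      = ts.map (fun t => h (t.subst g)) := by
  apply List.ext_getElem
  · rw [List.length_map, List.length_map, abstrArgs_length]
  · intro i h1 h2
    rw [List.length_map, abstrArgs_length] at h1
    rw [List.getElem_map, List.getElem_map]
    unfold abstrArgs
    rw [List.getElem_mapIdx]
    by_cases hv : (ts[i]).isVar
    · rw [if_pos hv]
      obtain ⟨x, hx⟩ := shallow_of_isVar hv
      have hxlt : x < base := hvarlt x (hx ▸ List.getElem_mem h1)
      rw [hx, Term.subst_var, if_pos hxlt, Term.subst_var]
    · rw [if_neg hv, Term.subst_var, if_neg (by omega : ¬ base + i < base)]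
      have : base + i - base = i := by omega
      rw [this, List.getD_eq_getElem ts d h1]

end SatBack

section SatBack2
variable {P F : Type} [DecidableEq P] [DecidableEq F]

lemma rrc_eq_self_of_ground_heads {domP : P} {C : Clause P F} (h : C.headVars = []) :
    rangeRestrictClause domP C = C := by
  unfold rangeRestrictClause
  rw [h]
  simp

lemma rangeVars_subst (args : List (Term F)) (d : Term F) :
    (rangeVars args.length : List (Term F)).map
      (Term.subst (fun n => args.getD n d)) = args := by
  apply List.ext_getElem
  · simp [rangeVars]
  · intro i h1 h2
    simp only [rangeVars, List.map_map, List.getElem_map, List.getElem_range,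
      Function.comp_apply, Term.subst_var]
    exact List.getD_eq_getElem args d h2

lemma sat_of_sat_rr (σ : Sig P F) (domP : P) (c : F) (M : Set (Clause P F))
    (hWF : WFSet σ M) (hσBS : ∀ fn ∈ σ.funcs, fn.2 = 0)
    (hsat : Satisfiable (rr σ domP c M)) : Satisfiable M := by
  classical
  obtain ⟨I, hIg, hI⟩ := hsat
  have hBS : ∀ C ∈ M, Clause.BS C := by
    intro C hC fn hfn
    exact hσBS fn ((hWF C hC).2 fn hfn)
  set h : Term F → Term F := fun t => if domAtom domP t ∈ I then t else cTerm c with hh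
  have hcg : (cTerm c : Term F).IsGround := by simp [cTerm, Term.IsGround]
  have h_ground : ∀ t : Term F, t.IsGround → (h t).IsGround := by
    intro t ht
    show (if domAtom domP t ∈ I then t else cTerm c).IsGround
    split
    · exact ht
    · exact hcg
  have fact_domc : domAtom domP (cTerm c) ∈ I := by
    have hdomc : rangeRestrictClause domP (domcClause domP c) = domcClause domP c := by
      apply rrc_eq_self_of_ground_heads
      simp [domcClause, Clause.headVars, domAtom, Atom.vars, cTerm]
    have hmem : domcClause domP c ∈ rr σ domP c M := by
      rw [← hdomc]
      exact Or.inl (Or.inl (Set.mem_image_of_mem _ (Or.inl (Or.inr rfl))))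
    have := hI _ hmem (fun _ => cTerm c) (fun _ => hcg)
      (by intro a ha; exact absurd ha List.not_mem_nil)
    obtain ⟨a, ha, haI⟩ := this
    simp only [domcClause, List.mem_singleton] at ha
    subst ha
    rw [domAtom_subst] at haI
    unfold cTerm at haI
    rw [Term.subst_const] at haI
    exact haI
  have h_dom : ∀ t : Term F, domAtom domP (h t) ∈ I := by
    intro t
    show domAtom domP (if domAtom domP t ∈ I then t else cTerm c) ∈ I
    split
    · assumption
    · exact fact_domc
  have h_fix : ∀ t : Term F, domAtom domP t ∈ I → h t = t := by
    intro t ht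
    show (if domAtom domP t ∈ I then t else cTerm c) = t
    exact if_pos ht
  -- step 4 consequence
  have fact_step4m : ∀ (p : P) (args : List (Term F)), (⟨p, args⟩ : Atom P F) ∈ I →
      (p, args.length) ∈ σ.preds → ∀ t ∈ args, domAtom domP t ∈ I := by
    intro p args hatom hp t ht
    obtain ⟨i, hi, hit⟩ := List.mem_iff_getElem.mp ht
    have hD : (⟨[domAtom domP (Term.var i)], [⟨p, rangeVars args.length⟩]⟩ : Clause P F)
        ∈ rr σ domP c M := Or.inl (Or.inr ⟨(p, args.length), hp, i, hi, rfl⟩)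
    have hgg : GroundSubst (fun n => args.getD n (cTerm c)) := by
      intro n
      show (args.getD n (cTerm c)).IsGround
      by_cases hn : n < args.length
      · rw [List.getD_eq_getElem args _ hn]
        exact Atom.ground_args (hIg _ hatom) (List.getElem_mem hn)
      · rw [List.getD_eq_default args _ (by omega)]
        exact hcg
    have := hI _ hD _ hgg (by
      intro a ha
      simp only [List.mem_singleton] at ha
      subst ha
      show Atom.subst _ _ ∈ I
      unfold Atom.subst
      simp only
      rw [rangeVars_subst args (cTerm c)]
      exact hatom)
    obtain ⟨a, ha, haI⟩ := this
    simp only [List.mem_singleton] at ha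
    subst ha
    rw [domAtom_subst, Term.subst_var] at haI
    rw [← hit, ← List.getD_eq_getElem args (cTerm c) hi]
    exact haI
  -- step 2 consequence
  have fact_step2m : ∀ C ∈ M, ∀ a ∈ C.body, ∀ t ∈ a.args, t.isVar = false →
      ∀ g₂ : ℕ → Term F, GroundSubst g₂ →
      (Atom.subst g₂ ⟨a.pred, abstrArgs (C.maxVar + 1) a.args⟩) ∈ I →
      domAtom domP t ∈ I := by
    intro C hC a ha t ht htv g₂ hg₂ habstr
    obtain ⟨i, hi, hit⟩ := List.mem_iff_getElem.mp ht
    have hget : a.args.get ⟨i, hi⟩ = t := hit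
    have hstep2 : (⟨[domAtom domP t], [⟨a.pred, abstrArgs (C.maxVar + 1) a.args⟩]⟩ : Clause P F)
        ∈ step2Set domP M := ⟨C, hC, a, ha, ⟨i, hi⟩, by rw [hget]; exact htv, by rw [hget]⟩
    obtain ⟨f, hf⟩ := shallow_const
      (shallow_of_BS (hBS C hC) (List.mem_append_right _ ha) ht) htv
    have hD : (⟨[domAtom domP t], [⟨a.pred, abstrArgs (C.maxVar + 1) a.args⟩]⟩ : Clause P F)
        ∈ rr σ domP c M := by
      have heq : rangeRestrictClause domP
          (⟨[domAtom domP t], [⟨a.pred, abstrArgs (C.maxVar + 1) a.args⟩]⟩ : Clause P F) =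
          ⟨[domAtom domP t], [⟨a.pred, abstrArgs (C.maxVar + 1) a.args⟩]⟩ := by
        apply rrc_eq_self_of_ground_heads
        show ([domAtom domP t] : List (Atom P F)).flatMap Atom.vars = []
        rw [List.flatMap_singleton, domAtom_vars, hf, Term.vars_const]
      rw [← heq]
      exact Or.inl (Or.inl (Set.mem_image_of_mem _ (Or.inr hstep2)))
    have := hI _ hD g₂ hg₂ (by
      intro b hb
      simp only [List.mem_singleton] at hb
      subst hb
      exact habstr)
    obtain ⟨b, hb, hbI⟩ := this
    simp only [List.mem_singleton] at hb
    subst hb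
    rw [domAtom_subst, ground_subst_eq (Or.inr ⟨f, hf⟩) (by rw [hf]; simp [Term.IsGround])] at hbI
    exact hbI
  -- the model of M
  refine ⟨{x | x.IsGround ∧ (⟨x.pred, x.args.map h⟩ : Atom P F) ∈ I}, ?_, ?_⟩
  · intro a ha
    exact ha.1
  intro C hC g hg hbody
  have hshC : ShallowClause C := shallowClause_of_BS (hBS C hC)
  set base := C.maxVar + 1 with hbase
  have hg' : GroundSubst (fun n => h (g n)) := fun n => h_ground _ (hg n)
  -- variables of C are below base
  have hvarlt : ∀ a ∈ C.atoms, ∀ x : ℕ, Term.var x ∈ a.args → x < base := by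
    intro a ha x hx
    have : x ∈ C.vars := atom_vars_subset ha
      (term_var_mem_atom_vars hx (by rw [Term.vars_var]; exact List.mem_singleton.mpr rfl))
    have := mem_vars_le_maxVar this
    omega
  -- Step A: dom holds for every constant argument of a body atom
  have stepA : ∀ a ∈ C.body, ∀ t ∈ a.args, t.isVar = false → domAtom domP t ∈ I := by
    intro a ha t ht htv
    have hJ := hbody a ha
    obtain ⟨hJg, hJI⟩ := hJ
    set g'' : ℕ → Term F := fun n =>
      if n < base then h (g n) else h ((a.args.getD (n - base) (cTerm c)).subst g) with hg''def
    have hg'' : GroundSubst g'' := by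
      intro n
      rw [hg''def]
      simp only
      split
      · exact h_ground _ (by rw [← Term.subst_var g n]; exact Shallow.subst_ground (Or.inl ⟨n, rfl⟩) hg)
      · apply h_ground
        by_cases hn : n - base < a.args.length
        · rw [List.getD_eq_getElem _ _ hn]
          exact (hshC a (List.mem_append_right _ ha) _ (List.getElem_mem hn)).subst_ground hg
        · rw [List.getD_eq_default _ _ (by omega)]
          exact Shallow.subst_ground (Or.inr ⟨c, rfl⟩) hg
    apply fact_step2m C hC a ha t ht htv g'' hg''
    show (⟨a.pred, (abstrArgs base a.args).map (Term.subst g'')⟩ : Atom P F) ∈ I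
    rw [hg''def]
    rw [abstrArgs_subst g h (hvarlt a (List.mem_append_right _ ha)) (cTerm c)]
    have : a.args.map (fun t => h (t.subst g)) = (a.args.map (Term.subst g)).map h := by
      rw [List.map_map]
      rfl
    rw [this]
    exact hJI
  -- Step B: body of C under g' lands in I
  have stepB : ∀ a ∈ C.body, a.subst (fun n => h (g n)) ∈ I := by
    intro a ha
    obtain ⟨hJg, hJI⟩ := hbody a ha
    show (⟨a.pred, a.args.map (Term.subst (fun n => h (g n)))⟩ : Atom P F) ∈ I
    rw [map_subst_h h (hshC a (List.mem_append_right _ ha))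
      (fun t ht htv => h_fix t (stepA a ha t ht htv)) g]
    exact hJI
  -- apply satisfaction of rangeRestrictClause C
  have hrrC : rangeRestrictClause domP C ∈ rr σ domP c M :=
    Or.inl (Or.inl (Set.mem_image_of_mem _ (Or.inl (Or.inl hC))))
  have := hI _ hrrC (fun n => h (g n)) hg' (by
    intro b hb
    rw [rangeRestrictClause_body] at hb
    rcases List.mem_append.mp hb with hb | hb
    · exact stepB b hb
    · rw [List.mem_map] at hb
      obtain ⟨v, _, rfl⟩ := hb
      rw [domAtom_subst, Term.subst_var]
      exact h_dom (g v))
  obtain ⟨a₀, ha₀, hIa₀⟩ := this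
  rw [rangeRestrictClause_heads] at ha₀
  -- Step D: a₀.subst g ∈ J
  refine ⟨a₀, ha₀, ?_, ?_⟩
  · exact Atom.subst_ground (hshC a₀ (List.mem_append_left _ ha₀)) hg
  · -- dom holds for every constant argument of a₀
    have hdomargs : ∀ t ∈ a₀.args, t.isVar = false → domAtom domP t ∈ I := by
      intro t ht htv
      have hsh := hshC a₀ (List.mem_append_left _ ha₀) t ht
      obtain ⟨f, hf⟩ := shallow_const hsh htv
      have hpn : (a₀.pred, (a₀.args.map (Term.subst (fun n => h (g n)))).length) ∈ σ.preds := by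
        rw [List.length_map]
        exact (hWF C hC).1 _ (pred_in_preds (List.mem_append_left _ ha₀))
      have htmem : t ∈ a₀.args.map (Term.subst (fun n => h (g n))) := by
        rw [List.mem_map]
        exact ⟨t, ht, ground_subst_eq hsh (by rw [hf]; simp [Term.IsGround]) _⟩
      exact fact_step4m a₀.pred _ hIa₀ hpn t htmem
    show (⟨a₀.pred, ((a₀.subst g).args).map h⟩ : Atom P F) ∈ I
    rw [Atom.subst_args]
    rw [← map_subst_h h (hshC a₀ (List.mem_append_left _ ha₀))
      (fun t ht htv => h_fix t (hdomargs t ht htv)) g]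
    exact hIa₀

end SatBack2

section SumHelpers
variable {α β : Type} [DecidableEq α] [DecidableEq β]

lemma sum_union_le' (s t : Finset α) (f : α → ℕ) :
    ∑ x ∈ s ∪ t, f x ≤ ∑ x ∈ s, f x + ∑ x ∈ t, f x := by
  calc ∑ x ∈ s ∪ t, f x ≤ ∑ x ∈ s ∪ t, f x + ∑ x ∈ s ∩ t, f x := Nat.le_add_right _ _
    _ = _ := Finset.sum_union_inter

lemma sum_insert_le' (a : α) (s : Finset α) (f : α → ℕ) :
    ∑ x ∈ insert a s, f x ≤ f a + ∑ x ∈ s, f x := by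
  rw [Finset.insert_eq]
  calc ∑ x ∈ {a} ∪ s, f x ≤ ∑ x ∈ ({a} : Finset α), f x + ∑ x ∈ s, f x := sum_union_le' _ _ _
    _ = f a + ∑ x ∈ s, f x := by rw [Finset.sum_singleton]

lemma sum_image_le' (s : Finset α) (f : α → β) (g : β → ℕ) :
    ∑ x ∈ s.image f, g x ≤ ∑ x ∈ s, g (f x) := by
  induction s using Finset.induction_on with
  | empty => simp
  | insert a s hnotmem ih =>
    rw [Finset.image_insert, Finset.sum_insert hnotmem]
    calc ∑ x ∈ insert (f a) (s.image f), g x ≤ g (f a) + ∑ x ∈ s.image f, g x :=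
        sum_insert_le' _ _ _
      _ ≤ g (f a) + ∑ x ∈ s, g (f x) := Nat.add_le_add_left ih _

lemma sum_biUnion_le' (s : Finset α) (T : α → Finset β) (f : β → ℕ) :
    ∑ x ∈ s.biUnion T, f x ≤ ∑ a ∈ s, ∑ x ∈ T a, f x := by
  induction s using Finset.induction_on with
  | empty => simp
  | insert a s hnotmem ih =>
    rw [Finset.biUnion_insert, Finset.sum_insert hnotmem]
    calc ∑ x ∈ T a ∪ s.biUnion T, f x ≤ ∑ x ∈ T a, f x + ∑ x ∈ s.biUnion T, f x :=
        sum_union_le' _ _ _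
      _ ≤ _ := Nat.add_le_add_left ih _

lemma sum_toFinset_le' (f : α → ℕ) : ∀ l : List α, ∑ x ∈ l.toFinset, f x ≤ (l.map f).sum := by
  intro l
  induction l with
  | nil => simp
  | cons a l ih =>
    rw [List.toFinset_cons, List.map_cons, List.sum_cons]
    calc ∑ x ∈ insert a l.toFinset, f x ≤ f a + ∑ x ∈ l.toFinset, f x := sum_insert_le' _ _ _
      _ ≤ f a + (l.map f).sum := Nat.add_le_add_left ih _

lemma setSize_eq_sum {P F : Type} {M : Set (Clause P F)} (hM : M.Finite) :
    setSize M = ∑ C ∈ hM.toFinset, C.size := by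
  unfold setSize
  rw [← finsum_mem_coe_finset, Set.Finite.coe_toFinset]

lemma setSize_le_sum {P F : Type} {M : Set (Clause P F)} (s : Finset (Clause P F))
    (hs : M ⊆ ↑s) : setSize M ≤ ∑ C ∈ s, C.size := by
  have hM : M.Finite := Set.Finite.subset s.finite_toSet hs
  rw [setSize_eq_sum hM]
  apply Finset.sum_le_sum_of_subset
  intro x hx
  exact hs (hM.mem_toFinset.mp hx)

end SumHelpers

section Fin2
variable {P F : Type} [DecidableEq P] [DecidableEq F]

/-- The step-2 clauses generated by a single body atom, as a list. -/
def step2List (domP : P) (base : ℕ) (a : Atom P F) : List (Clause P F) :=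
  (List.finRange a.args.length).filterMap (fun i =>
    if (a.args.get i).isVar then none
    else some ⟨[domAtom domP (a.args.get i)], [⟨a.pred, abstrArgs base a.args⟩]⟩)

lemma mem_step2List {domP : P} {base : ℕ} {a : Atom P F} {D : Clause P F} :
    D ∈ step2List domP base a ↔ ∃ i : Fin a.args.length, (a.args.get i).isVar = false ∧
      D = ⟨[domAtom domP (a.args.get i)], [⟨a.pred, abstrArgs base a.args⟩]⟩ := by
  unfold step2List
  rw [List.mem_filterMap]
  constructor
  · rintro ⟨i, -, hi⟩
    by_cases hv : (a.args.get i).isVar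
    · rw [if_pos hv] at hi
      exact absurd hi (by simp)
    · rw [if_neg hv] at hi
      exact ⟨i, Bool.eq_false_iff.mpr hv, (Option.some_inj.mp hi).symm⟩
  · rintro ⟨i, hv, rfl⟩
    refine ⟨i, List.mem_finRange i, ?_⟩
    rw [if_neg (by rw [show (a.args.get i) = a.args[i.1] from rfl] at hv; simp [hv])]

lemma step2Set_subset (domP : P) (M : Set (Clause P F)) :
    step2Set domP M ⊆ ⋃ C ∈ M, {D | D ∈ C.body.flatMap (step2List domP (C.maxVar + 1))} := by
  rintro D ⟨C, hC, a, ha, i, hiv, rfl⟩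
  simp only [Set.mem_iUnion, Set.mem_setOf_eq]
  refine ⟨C, hC, ?_⟩
  rw [List.mem_flatMap]
  exact ⟨a, ha, mem_step2List.mpr ⟨i, hiv, rfl⟩⟩

lemma step2Set_finite (domP : P) {M : Set (Clause P F)} (hM : M.Finite) :
    (step2Set domP M).Finite := by
  apply Set.Finite.subset ?_ (step2Set_subset domP M)
  exact Set.Finite.biUnion hM (fun C _ => List.finite_toSet _)

lemma step4Set_finite (domP : P) {Ps : Set (P × ℕ)} (hPs : Ps.Finite) :
    (step4Set domP Ps : Set (Clause P F)).Finite := by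
  have hsub : (step4Set domP Ps : Set (Clause P F)) ⊆
      ⋃ pn ∈ Ps, (fun i => (⟨[domAtom domP (Term.var i)], [⟨pn.1, rangeVars pn.2⟩]⟩ :
        Clause P F)) '' (Set.Iio pn.2) := by
    rintro D ⟨pn, hpn, i, hi, rfl⟩
    simp only [Set.mem_iUnion]
    exact ⟨pn, hpn, Set.mem_image_of_mem _ (Set.mem_Iio.mpr hi)⟩
  exact Set.Finite.subset (Set.Finite.biUnion hPs
    (fun pn _ => (Set.finite_Iio pn.2).image _)) hsub

lemma rr_finite (σ : Sig P F) (domP : P) (c : F) {M : Set (Clause P F)} (hM : M.Finite)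
    (hσBS : ∀ fn ∈ σ.funcs, fn.2 = 0) (hσPfin : σ.preds.Finite) :
    (rr σ domP c M).Finite := by
  rw [rr_eq σ domP c M hσBS]
  exact Set.Finite.union
    (Set.Finite.image _ (Set.Finite.union (Set.Finite.union hM (Set.finite_singleton _))
      (step2Set_finite domP hM)))
    (step4Set_finite domP hσPfin)

end Fin2

section Sizes
variable {P F : Type} [DecidableEq P] [DecidableEq F]

lemma sum_map_const {α : Type} (l : List α) (k : ℕ) : (l.map (fun _ => k)).sum = l.length * k := by
  induction l with
  | nil => simp
  | cons a l ih => simp [ih]; ring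

lemma sum_map_one {α : Type} : ∀ l : List α, (l.map (fun _ => (1 : ℕ))).sum = l.length := by
  intro l
  induction l with
  | nil => rfl
  | cons a l ih => simp [ih]; omega

lemma shallow_size {t : Term F} (h : Shallow t) : t.size = 1 := by
  rcases h with ⟨n, rfl⟩ | ⟨f, rfl⟩ <;> simp

lemma shallow_vars_length {t : Term F} (h : Shallow t) : t.vars.length ≤ 1 := by
  rcases h with ⟨n, rfl⟩ | ⟨f, rfl⟩ <;> simp

lemma atom_size_shallow {a : Atom P F} (h : ∀ t ∈ a.args, Shallow t) :
    a.size = 1 + a.args.length := by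
  unfold Atom.size
  congr 1
  rw [List.map_congr_left (fun t ht => shallow_size (h t ht))]
  exact sum_map_one _

lemma atom_vars_length_le {a : Atom P F} (h : ∀ t ∈ a.args, Shallow t) :
    a.vars.length ≤ a.args.length := by
  unfold Atom.vars
  rw [List.length_flatMap]
  calc (a.args.map (List.length ∘ Term.vars)).sum
      ≤ (a.args.map (fun _ => 1)).sum := by
        apply List.sum_le_sum
        intro t ht
        exact shallow_vars_length (h t ht)
    _ = a.args.length := sum_map_one _

lemma atom_args_le_size (a : Atom P F) : a.args.length ≤ a.size := by
  unfold Atom.size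
  have : a.args.length ≤ (a.args.map Term.size).sum := by
    calc a.args.length = (a.args.map (fun _ => 1)).sum := (sum_map_one _).symm
      _ ≤ _ := by
        apply List.sum_le_sum
        intro t _
        cases t <;> simp [Term.size] <;> omega
  omega

lemma clause_size_eq (C : Clause P F) :
    C.size = (C.heads.map Atom.size).sum + (C.body.map Atom.size).sum := by
  unfold Clause.size Clause.atoms
  rw [List.map_append, List.sum_append]

lemma domAtom_size (domP : P) (t : Term F) : (domAtom domP t).size = 1 + t.size := by
  simp [domAtom, Atom.size]

lemma headVars_length_le {C : Clause P F} (h : ShallowClause C) :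
    C.headVars.length ≤ (C.heads.map Atom.size).sum := by
  unfold Clause.headVars
  rw [List.length_flatMap]
  apply List.sum_le_sum
  intro a ha
  calc (List.length ∘ Atom.vars) a ≤ a.args.length :=
      atom_vars_length_le (fun t ht => h a (List.mem_append_left _ ha) t ht)
    _ ≤ a.size := atom_args_le_size a

lemma rangeRestrict_size_le (domP : P) {C : Clause P F} (h : ShallowClause C) :
    (rangeRestrictClause domP C).size ≤ 3 * C.size := by
  rw [clause_size_eq, rangeRestrictClause_heads, rangeRestrictClause_body,
    List.map_append, List.sum_append]
  have hdoms : ((((C.headVars.filter (fun v => v ∉ C.bodyVars)).dedup).map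
      (fun v => (domAtom domP (Term.var v) : Atom P F))).map Atom.size).sum ≤ 2 * C.size := by
    rw [List.map_map]
    have : (Atom.size ∘ fun v => (domAtom domP (Term.var v) : Atom P F)) = fun _ => 2 := by
      funext v
      simp [domAtom_size]
    rw [this]
    have hlen : ((C.headVars.filter (fun v => v ∉ C.bodyVars)).dedup).length ≤ C.size := by
      calc ((C.headVars.filter (fun v => v ∉ C.bodyVars)).dedup).length
          ≤ (C.headVars.filter (fun v => v ∉ C.bodyVars)).length :=
            List.Sublist.length_le (List.dedup_sublist _)
        _ ≤ C.headVars.length := List.length_filter_le _ _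
        _ ≤ (C.heads.map Atom.size).sum := headVars_length_le h
        _ ≤ C.size := by rw [clause_size_eq]; omega
    rw [sum_map_const]
    omega
  have hCsize := clause_size_eq C
  omega

lemma domc_size (domP : P) (c : F) : (domcClause domP c).size = 2 := by
  unfold domcClause cTerm
  rw [clause_size_eq]
  simp [domAtom_size]

lemma step2List_size {domP : P} {base : ℕ} {a : Atom P F} (hsh : ∀ t ∈ a.args, Shallow t) :
    ∀ D ∈ step2List domP base a, D.size = 3 + a.args.length := by
  intro D hD
  obtain ⟨i, hiv, rfl⟩ := mem_step2List.mp hD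
  rw [clause_size_eq]
  simp only [List.map_cons, List.map_nil, List.sum_cons, List.sum_nil]
  rw [domAtom_size, shallow_size (hsh _ (List.get_mem a.args i))]
  rw [atom_size_shallow (by
    intro t ht
    obtain ⟨n, rfl⟩ := abstrArgs_isvar base ht
    exact Or.inl ⟨n, rfl⟩)]
  show 1 + 1 + 0 + (1 + (abstrArgs base a.args).length + 0) = 3 + a.args.length
  rw [abstrArgs_length]
  omega

lemma step2List_length {domP : P} {base : ℕ} (a : Atom P F) :
    (step2List domP base a).length ≤ a.args.length := by
  unfold step2List
  calc _ ≤ (List.finRange a.args.length).length := List.length_filterMap_le _ _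
    _ = a.args.length := List.length_finRange

lemma sum_map_flatMap {α β : Type} (l : List α) (f : α → List β) (g : β → ℕ) :
    ((l.flatMap f).map g).sum = (l.map (fun a => ((f a).map g).sum)).sum := by
  induction l with
  | nil => rfl
  | cons a l ih => simp [List.flatMap_cons, ih]

lemma body_args_le_size (C : Clause P F) :
    (C.body.map (fun a => a.args.length)).sum ≤ C.size := by
  rw [clause_size_eq]
  have : (C.body.map (fun a => a.args.length)).sum ≤ (C.body.map Atom.size).sum := by
    apply List.sum_le_sum
    intro a _
    exact atom_args_le_size a
  omega

lemma step2_total_size {domP : P} {C : Clause P F} {A : ℕ} (hsh : ShallowClause C)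
    (hA : ∀ a ∈ C.atoms, a.args.length ≤ A) :
    ((C.body.flatMap (step2List domP (C.maxVar + 1))).map Clause.size).sum
      ≤ (3 + A) * C.size := by
  rw [sum_map_flatMap]
  have hper : ∀ a ∈ C.body, (((step2List domP (C.maxVar + 1) a).map Clause.size).sum)
      ≤ (3 + A) * a.args.length := by
    intro a ha
    have hsha := fun t ht => hsh a (List.mem_append_right _ ha) t ht
    have : ((step2List domP (C.maxVar + 1) a).map Clause.size).sum
        ≤ ((step2List domP (C.maxVar + 1) a).map (fun _ => 3 + a.args.length)).sum := by
      apply List.sum_le_sum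
      intro D hD
      rw [step2List_size hsha D hD]
    refine le_trans this ?_
    have hlen := step2List_length (domP := domP) (base := C.maxVar + 1) a
    have hAa := hA a (List.mem_append_right _ ha)
    rw [sum_map_const]
    calc (step2List domP (C.maxVar + 1) a).length * (3 + a.args.length)
        ≤ a.args.length * (3 + A) := Nat.mul_le_mul hlen (by omega)
      _ = (3 + A) * a.args.length := Nat.mul_comm _ _
  calc (C.body.map (fun a => ((step2List domP (C.maxVar + 1) a).map Clause.size).sum)).sum
      ≤ (C.body.map (fun a => (3 + A) * a.args.length)).sum := List.sum_le_sum hper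
    _ = (3 + A) * (C.body.map (fun a => a.args.length)).sum := by
        induction C.body with
        | nil => simp
        | cons a l ih => simp [ih]; ring
    _ ≤ (3 + A) * C.size := Nat.mul_le_mul_left _ (body_args_le_size C)

end Sizes

section Final
variable {P F : Type} [DecidableEq P] [DecidableEq F]

lemma rr_size_le (σ : Sig P F) (domP : P) (c : F) (M : Set (Clause P F)) (hM : M.Finite)
    (hWF : WFSet σ M) (hσBS : ∀ fn ∈ σ.funcs, fn.2 = 0) (hσPfin : σ.preds.Finite) :
    setSize (rr σ domP c M) ≤ (12 + 3 * (hσPfin.toFinset.sup (fun pn => pn.2))) * setSize M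
      + (setSize (step4Set domP σ.preds : Set (Clause P F)) + 6) := by
  classical
  set A := hσPfin.toFinset.sup (fun pn => pn.2) with hA
  have hBS : ∀ C ∈ M, Clause.BS C := by
    intro C hC fn hfn
    exact hσBS fn ((hWF C hC).2 fn hfn)
  have hsh : ∀ C ∈ M, ShallowClause C := fun C hC => shallowClause_of_BS (hBS C hC)
  have harity : ∀ C ∈ M, ∀ a ∈ C.atoms, a.args.length ≤ A := by
    intro C hC a ha
    have : (a.pred, a.args.length) ∈ σ.preds := (hWF C hC).1 _ (pred_in_preds ha)
    exact Finset.le_sup (f := fun pn : P × ℕ => pn.2) (hσPfin.mem_toFinset.mpr this)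
  set FM := hM.toFinset with hFM
  have h2fin := step2Set_finite domP hM
  have h4fin := step4Set_finite (F := F) domP hσPfin
  set F2 := h2fin.toFinset with hF2
  set F4 := h4fin.toFinset with hF4
  set Fsrc := FM ∪ {domcClause domP c} ∪ F2 with hFsrc
  set rrf := rangeRestrictClause (F := F) domP with hrrf
  -- main subset
  have hsub : rr σ domP c M ⊆ ↑(Fsrc.image rrf ∪ F4) := by
    rw [rr_eq σ domP c M hσBS]
    rw [Finset.coe_union, Finset.coe_image]
    apply Set.union_subset_union
    · apply Set.image_mono
      rw [hFsrc, Finset.coe_union, Finset.coe_union]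
      apply Set.union_subset_union
      · apply Set.union_subset_union
        · rw [Set.Finite.coe_toFinset]
        · simp
      · rw [Set.Finite.coe_toFinset]
    · rw [Set.Finite.coe_toFinset]
  have step0 : setSize (rr σ domP c M) ≤ ∑ D ∈ Fsrc.image rrf ∪ F4, D.size :=
    setSize_le_sum _ hsub
  have step1 : ∑ D ∈ Fsrc.image rrf ∪ F4, D.size
      ≤ ∑ D ∈ Fsrc.image rrf, D.size + ∑ D ∈ F4, D.size := sum_union_le' _ _ _
  have step4eq : ∑ D ∈ F4, D.size = setSize (step4Set domP σ.preds : Set (Clause P F)) :=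
    (setSize_eq_sum h4fin).symm
  have step2a : ∑ D ∈ Fsrc.image rrf, D.size ≤ ∑ C ∈ Fsrc, (rrf C).size :=
    sum_image_le' _ _ _
  have step2b : ∑ C ∈ Fsrc, (rrf C).size
      ≤ ∑ C ∈ FM ∪ {domcClause domP c}, (rrf C).size + ∑ C ∈ F2, (rrf C).size :=
    sum_union_le' _ _ _
  have step2c : ∑ C ∈ FM ∪ {domcClause domP c}, (rrf C).size
      ≤ ∑ C ∈ FM, (rrf C).size + ∑ C ∈ ({domcClause domP c} : Finset (Clause P F)), (rrf C).size :=
    sum_union_le' _ _ _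
  have hMsize : ∑ C ∈ FM, (rrf C).size ≤ 3 * setSize M := by
    rw [setSize_eq_sum hM, Finset.mul_sum]
    apply Finset.sum_le_sum
    intro C hC
    exact rangeRestrict_size_le domP (hsh C (hM.mem_toFinset.mp hC))
  have hdomcsize : ∑ C ∈ ({domcClause domP c} : Finset (Clause P F)), (rrf C).size ≤ 6 := by
    rw [Finset.sum_singleton]
    calc (rrf (domcClause domP c)).size ≤ 3 * (domcClause domP c).size :=
        rangeRestrict_size_le domP (domc_shallow domP c)
      _ = 6 := by rw [domc_size]
  have hF2size : ∑ C ∈ F2, (rrf C).size ≤ 3 * ((3 + A) * setSize M) := by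
    have h1 : ∑ C ∈ F2, (rrf C).size ≤ 3 * ∑ C ∈ F2, C.size := by
      rw [Finset.mul_sum]
      apply Finset.sum_le_sum
      intro D hD
      exact rangeRestrict_size_le domP (step2_shallow hBS (h2fin.mem_toFinset.mp hD))
    have h2 : ∑ C ∈ F2, C.size ≤ (3 + A) * setSize M := by
      set BigF := FM.biUnion
        (fun C => (C.body.flatMap (step2List domP (C.maxVar + 1))).toFinset) with hBigF
      have hsub2 : step2Set domP M ⊆ ↑BigF := by
        intro D hD
        have := step2Set_subset domP M hD
        simp only [Set.mem_iUnion, Set.mem_setOf_eq] at this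
        obtain ⟨C, hC, hDmem⟩ := this
        rw [hBigF, Finset.coe_biUnion]
        simp only [Set.mem_iUnion]
        exact ⟨C, hM.mem_toFinset.mpr hC, List.mem_toFinset.mpr hDmem⟩
      calc ∑ C ∈ F2, C.size = setSize (step2Set domP M) := (setSize_eq_sum h2fin).symm
        _ ≤ ∑ D ∈ BigF, D.size := setSize_le_sum _ hsub2
        _ ≤ ∑ C ∈ FM, ∑ D ∈ (C.body.flatMap (step2List domP (C.maxVar + 1))).toFinset, D.size :=
            sum_biUnion_le' _ _ _
        _ ≤ ∑ C ∈ FM, ((C.body.flatMap (step2List domP (C.maxVar + 1))).map Clause.size).sum :=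
            Finset.sum_le_sum (fun C _ => sum_toFinset_le' _ _)
        _ ≤ ∑ C ∈ FM, (3 + A) * C.size := by
            apply Finset.sum_le_sum
            intro C hC
            exact step2_total_size (hsh C (hM.mem_toFinset.mp hC))
              (harity C (hM.mem_toFinset.mp hC))
        _ = (3 + A) * setSize M := by rw [setSize_eq_sum hM, Finset.mul_sum]
    calc ∑ C ∈ F2, (rrf C).size ≤ 3 * ∑ C ∈ F2, C.size := h1
      _ ≤ 3 * ((3 + A) * setSize M) := Nat.mul_le_mul_left _ h2
  have hfinal : 3 * setSize M + 6 + 3 * ((3 + A) * setSize M)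
      + setSize (step4Set domP σ.preds : Set (Clause P F))
      = (12 + 3 * A) * setSize M
        + (setSize (step4Set domP σ.preds : Set (Clause P F)) + 6) := by ring
  omega

end Final

/-- **Satisfiability-equivalence preserving reduction of BS clauses to range-restricted BS
clauses** (part of Theorem 3): if `M` is a set of BS clauses (without equality, over a
finite signature all of whose function symbols are constants), then `rr(M)` is a
range-restricted set of BS clauses, `M` is satisfiable if and only if `rr(M)` is
satisfiable, and the size of `rr(M)` is bounded by a linear function in the size of `M`. -/
theorem rr_BS {P F : Type} [DecidableEq P] [DecidableEq F]
    (σ : Sig P F) (domP : P) (c : F) (eqP : P)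
    (hσBS : ∀ fn ∈ σ.funcs, fn.2 = 0)
    (hσPfin : σ.preds.Finite) (hσFfin : σ.funcs.Finite)
    (hdomFresh : ∀ n, (domP, n) ∉ σ.preds) :
    ∃ a b : ℕ, ∀ M : Set (Clause P F), M.Finite → WFSet σ M →
      (∀ C ∈ M, ∀ at_ ∈ Clause.atoms C, at_.pred ≠ eqP) →
      RangeRestrictedSet (rr σ domP c M) ∧
      (∀ C ∈ rr σ domP c M, Clause.BS C) ∧
      (Satisfiable M ↔ Satisfiable (rr σ domP c M)) ∧
      (rr σ domP c M).Finite ∧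
      setSize (rr σ domP c M) ≤ a * setSize M + b := by
  refine ⟨12 + 3 * (hσPfin.toFinset.sup (fun pn => pn.2)),
    setSize (step4Set domP σ.preds : Set (Clause P F)) + 6, ?_⟩
  intro M hM hWF _
  have hBS : ∀ C ∈ M, Clause.BS C := by
    intro C hC fn hfn
    exact hσBS fn ((hWF C hC).2 fn hfn)
  refine ⟨rr_is_RR σ domP c M hσBS, rr_is_BS σ domP c M hσBS hBS,
    ⟨sat_rr_of_sat σ domP c M hWF hdomFresh hσBS, sat_of_sat_rr σ domP c M hWF hσBS⟩,
    rr_finite σ domP c hM hσBS hσPfin,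
    rr_size_le σ domP c M hM hWF hσBS hσPfin⟩

end BUMG
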